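/- Let κ be a regular cardinal and μ a (κ,κ⁺)-cardinal. For α < κ⁺ and ξ < ht(μ), the set μ_ξ(α) := X ∩ α is well-defined, i.e., independent of the choice of X ∈ μ with rank(X) = ξ and α ∈ X, and such an X always exists. -/

import Mathlib

open Set Cardinal Ordinal

noncomputable section

/-- Lower a (small) ordinal of `Ordinal.{1}` to `Ordinal.{0}` (the inverse of `Ordinal.lift`
on its range). -/
noncomputable def olower (o : Ordinal.{1}) : Ordinal.{0} :=
  sInf {a : Ordinal.{0} | Ordinal.lift.{1} a = o}

/-- The order type of a set of ordinals. -/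
noncomputable def otp (A : Set Ordinal.{0}) : Ordinal.{0} :=
  olower (Ordinal.type (Subrel ((· < ·) : Ordinal → Ordinal → Prop) (· ∈ A)))

/-- The canonical order-preserving transfer map from a set of ordinals `X` to a set of
ordinals `Y` of the same order type: an element `a ∈ X` is sent to the unique element of `Y`
occupying the same position. -/
noncomputable def omap (X Y : Set Ordinal) (a : Ordinal) : Ordinal :=
  sInf {b | b ∈ Y ∧ otp (Y ∩ Set.Iio b) = otp (X ∩ Set.Iio a)}

/-- `IsStar X₁ X₂ X` says `X = X₁ * X₂`: `X₁` and `X₂` have the same order type,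
`X = X₁ ∪ X₂`, and `X₁ ∩ X₂ < X₁ \ X₂ < X₂ \ X₁` elementwise. -/
def IsStar (X₁ X₂ X : Set Ordinal) : Prop :=
  otp X₁ = otp X₂ ∧ X = X₁ ∪ X₂ ∧
  (∀ a ∈ X₁ ∩ X₂, ∀ b ∈ X₁ \ X₂, a < b) ∧
  (∀ b ∈ X₁ \ X₂, ∀ c ∈ X₂ \ X₁, b < c)

set_option linter.deprecated false in
/-- A `(κ,κ⁺)`-cardinal (a neat simplified `(κ,1)`-morass presented as a family of sets):
a family `μ ⊆ ℘_κ(κ⁺)` which is well-founded under strict inclusion, locally small,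
homogeneous, directed, locally almost directed, covers `κ⁺` and is neat. -/
structure TwoCardinal (κ : Cardinal.{0}) where
  mu : Set (Set Ordinal)
  mem_sub : ∀ X ∈ mu, X ⊆ Set.Iio (Order.succ κ).ord
  mem_small : ∀ X ∈ mu, (otp X).card < κ
  wf : WellFounded fun X Y : mu => (X : Set Ordinal) ⊂ (Y : Set Ordinal)
  locSmall : ∀ X : mu,
    #{Z : mu // (Z : Set Ordinal) ⊂ (X : Set Ordinal)} < Cardinal.lift.{1} κ
  homog : ∀ X Y : mu, (wf.apply X).rank = (wf.apply Y).rank →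
    otp (X : Set Ordinal) = otp (Y : Set Ordinal) ∧
    {Z | Z ∈ mu ∧ Z ⊂ (Y : Set Ordinal)} =
      (fun Z => omap (X : Set Ordinal) (Y : Set Ordinal) '' Z) ''
        {Z | Z ∈ mu ∧ Z ⊂ (X : Set Ordinal)}
  directed : ∀ X ∈ mu, ∀ Y ∈ mu, ∃ Z ∈ mu, X ⊆ Z ∧ Y ⊆ Z
  locAlmostDirected : ∀ X : mu,
    (∀ Z₁ ∈ mu, ∀ Z₂ ∈ mu, Z₁ ⊂ (X : Set Ordinal) → Z₂ ⊂ (X : Set Ordinal) →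
      ∃ Z ∈ mu, Z ⊂ (X : Set Ordinal) ∧ Z₁ ⊆ Z ∧ Z₂ ⊆ Z) ∨
    (∃ X₁ X₂ : mu, (wf.apply X₁).rank = (wf.apply X₂).rank ∧
      IsStar (X₁ : Set Ordinal) (X₂ : Set Ordinal) (X : Set Ordinal) ∧
      {Z | Z ∈ mu ∧ Z ⊂ (X : Set Ordinal)} =
        {Z | Z ∈ mu ∧ Z ⊂ (X₁ : Set Ordinal)} ∪ {Z | Z ∈ mu ∧ Z ⊂ (X₂ : Set Ordinal)} ∪
          {(X₁ : Set Ordinal), (X₂ : Set Ordinal)})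
  covers : ⋃₀ mu = Set.Iio (Order.succ κ).ord
  neat : ∀ X : mu, (wf.apply X).rank ≠ 0 →
    (X : Set Ordinal) = ⋃₀ {Z | Z ∈ mu ∧ Z ⊂ (X : Set Ordinal)}

namespace TwoCardinal

variable {κ : Cardinal} (M : TwoCardinal κ)

set_option linter.deprecated false in
/-- The rank of an element of `μ` in the well-founded order `(μ, ⊂)`. -/
noncomputable def rank (X : M.mu) : Ordinal := olower ((M.wf.apply X).rank)

/-- The height of the well-founded order `(μ, ⊂)`. -/
noncomputable def ht : Ordinal := sSup (Set.range fun X : M.mu => M.rank X + 1)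

/-- The term `μ_ξ(α)` of the μ-sequence at `α`: equal to `X ∩ α` for any `X ∈ μ` of
rank `ξ` containing `α` (this is independent of the choice of `X`). -/
noncomputable def seq (α ξ : Ordinal) : Set Ordinal :=
  ⋃₀ {S | ∃ X : M.mu, M.rank X = ξ ∧ α ∈ (X : Set Ordinal) ∧
    S = (X : Set Ordinal) ∩ Set.Iio α}

/-- The μ-coloring `m(α,β) = min{rank X : α, β ∈ X ∈ μ}`. -/
noncomputable def mcol (a b : Ordinal) : Ordinal :=
  sInf {ξ | ∃ X : M.mu, M.rank X = ξ ∧ a ∈ (X : Set Ordinal) ∧ b ∈ (X : Set Ordinal)}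

end TwoCardinal


section Aux

open Ordinal

/-- liftability -/
def Liftable (o : Ordinal.{1}) : Prop := ∃ a : Ordinal.{0}, Ordinal.lift.{1} a = o

theorem olower_lift (a : Ordinal.{0}) : olower (Ordinal.lift.{1} a) = a := by
  have : {b : Ordinal.{0} | Ordinal.lift.{1} b = Ordinal.lift.{1} a} = {a} := by
    ext b; simp [Ordinal.lift_inj]
  rw [olower, this, csInf_singleton]

theorem Liftable.lift_olower {o : Ordinal.{1}} (h : Liftable o) :
    Ordinal.lift.{1} (olower o) = o := by
  obtain ⟨a, rfl⟩ := h; rw [olower_lift]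

theorem liftable_of_le {o : Ordinal.{1}} {a : Ordinal.{0}}
    (h : o ≤ Ordinal.lift.{1} a) : Liftable o :=
  Ordinal.mem_range_lift_of_le h

theorem olower_inj {o o' : Ordinal.{1}} (h : Liftable o) (h' : Liftable o')
    (e : olower o = olower o') : o = o' := by
  rw [← h.lift_olower, ← h'.lift_olower, e]

/-- order type of a set of ordinals, in `Ordinal.{1}` -/
noncomputable def T (A : Set Ordinal.{0}) : Ordinal.{1} :=
  Ordinal.type (Subrel ((· < ·) : Ordinal → Ordinal → Prop) (· ∈ A))

theorem otp_def (A : Set Ordinal.{0}) : otp A = olower (T A) := rfl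

theorem T_mono {A B : Set Ordinal.{0}} (h : A ⊆ B) : T A ≤ T B := by
  refine RelEmbedding.ordinal_type_le ⟨⟨Set.inclusion h, Set.inclusion_injective h⟩, Iff.rfl⟩

theorem T_Iio (o : Ordinal.{0}) : T (Set.Iio o) = Ordinal.lift.{1} o := by
  rw [T]
  exact (Ordinal.type_subrel _ o).trans (Ordinal.typein_ordinal o)

theorem liftable_T {A : Set Ordinal.{0}} {o : Ordinal.{0}} (h : A ⊆ Set.Iio o) :
    Liftable (T A) :=
  liftable_of_le ((T_mono h).trans_eq (T_Iio o))

theorem otp_eq_iff {A B : Set Ordinal.{0}} {o : Ordinal.{0}} (hA : A ⊆ Set.Iio o)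
    (hB : B ⊆ Set.Iio o) : otp A = otp B ↔ T A = T B := by
  constructor
  · exact fun h => olower_inj (liftable_T hA) (liftable_T hB) h
  · intro h; rw [otp_def, otp_def, h]

end Aux

section Aux2
open Ordinal

/-- index of an element within a set of ordinals -/
theorem T_inter_Iio {A : Set Ordinal.{0}} {b : Ordinal.{0}} (hb : b ∈ A) :
    T (A ∩ Set.Iio b) =
      Ordinal.typein (Subrel ((· < ·) : Ordinal → Ordinal → Prop) (· ∈ A)) ⟨b, hb⟩ := by
  rw [← Ordinal.type_subrel]
  refine Ordinal.type_eq.2 ⟨?_⟩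
  refine RelIso.symm ⟨⟨fun x => ⟨x.1.1, x.1.2, x.2⟩, fun y => ⟨⟨y.1, y.2.1⟩, y.2.2⟩,
    fun x => rfl, fun y => rfl⟩, Iff.rfl⟩

theorem T_index_lt {A : Set Ordinal.{0}} {a b : Ordinal.{0}} (ha : a ∈ A) (hb : b ∈ A) :
    T (A ∩ Set.Iio a) < T (A ∩ Set.Iio b) ↔ a < b := by
  rw [T_inter_Iio ha, T_inter_Iio hb]
  exact Ordinal.typein_lt_typein _

theorem T_index_inj {A : Set Ordinal.{0}} {a b : Ordinal.{0}} (ha : a ∈ A) (hb : b ∈ A)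
    (h : T (A ∩ Set.Iio a) = T (A ∩ Set.Iio b)) : a = b := by
  rcases lt_trichotomy a b with h' | h' | h'
  · exact absurd ((T_index_lt ha hb).2 h') (by rw [h]; exact lt_irrefl _)
  · exact h'
  · exact absurd ((T_index_lt hb ha).2 h') (by rw [h]; exact lt_irrefl _)

theorem T_index_lt_T {A : Set Ordinal.{0}} {a : Ordinal.{0}} (ha : a ∈ A) :
    T (A ∩ Set.Iio a) < T A := by
  rw [T_inter_Iio ha]; exact Ordinal.typein_lt_type _ _

theorem T_index_surj {A : Set Ordinal.{0}} {o : Ordinal.{1}} (h : o < T A) :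
    ∃ a, ∃ ha : a ∈ A, T (A ∩ Set.Iio a) = o := by
  obtain ⟨⟨a, ha⟩, e⟩ := Ordinal.typein_surj (Subrel ((· < ·) : Ordinal → Ordinal → Prop) (· ∈ A)) h
  exact ⟨a, ha, by rw [T_inter_Iio ha]; exact e⟩

end Aux2

section Aux3
open Ordinal

variable {Z₁ Z₂ : Set Ordinal.{0}} {o : Ordinal.{0}}

theorem omap_spec (h₁ : Z₁ ⊆ Set.Iio o) (h₂ : Z₂ ⊆ Set.Iio o) (hT : T Z₁ = T Z₂)
    {a : Ordinal} (ha : a ∈ Z₁) :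
    omap Z₁ Z₂ a ∈ Z₂ ∧ T (Z₂ ∩ Set.Iio (omap Z₁ Z₂ a)) = T (Z₁ ∩ Set.Iio a) := by
  obtain ⟨b, hb, hidx⟩ := T_index_surj (o := T (Z₁ ∩ Set.Iio a)) (hT ▸ T_index_lt_T ha)
  have hset : {c | c ∈ Z₂ ∧ otp (Z₂ ∩ Set.Iio c) = otp (Z₁ ∩ Set.Iio a)} = {b} := by
    ext c
    simp only [Set.mem_setOf_eq, Set.mem_singleton_iff]
    constructor
    · rintro ⟨hc, he⟩
      have : T (Z₂ ∩ Set.Iio c) = T (Z₂ ∩ Set.Iio b) := by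
        rw [hidx]
        exact (otp_eq_iff (fun x hx => h₂ hx.1) (fun x hx => h₁ hx.1)).1 he
      exact T_index_inj hc hb this
    · rintro rfl
      exact ⟨hb, (otp_eq_iff (fun x hx => h₂ hx.1) (fun x hx => h₁ hx.1)).2 hidx⟩
  have : omap Z₁ Z₂ a = b := by rw [omap, hset, csInf_singleton]
  rw [this]; exact ⟨hb, hidx⟩

theorem omap_eq_of (h₁ : Z₁ ⊆ Set.Iio o) (h₂ : Z₂ ⊆ Set.Iio o) (hT : T Z₁ = T Z₂)
    {a b : Ordinal} (ha : a ∈ Z₁) (hb : b ∈ Z₂)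
    (hidx : T (Z₂ ∩ Set.Iio b) = T (Z₁ ∩ Set.Iio a)) : omap Z₁ Z₂ a = b := by
  obtain ⟨hmem, he⟩ := omap_spec h₁ h₂ hT ha
  exact T_index_inj hmem hb (he.trans hidx.symm)

theorem omap_lt_omap (h₁ : Z₁ ⊆ Set.Iio o) (h₂ : Z₂ ⊆ Set.Iio o) (hT : T Z₁ = T Z₂)
    {a a' : Ordinal} (ha : a ∈ Z₁) (ha' : a' ∈ Z₁) (h : a < a') :
    omap Z₁ Z₂ a < omap Z₁ Z₂ a' := by
  obtain ⟨hm, he⟩ := omap_spec h₁ h₂ hT ha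
  obtain ⟨hm', he'⟩ := omap_spec h₁ h₂ hT ha'
  rw [← T_index_lt (A := Z₁) ha ha'] at h
  rw [← T_index_lt (A := Z₂) hm hm'] at *
  rwa [he, he']

theorem omap_injOn (h₁ : Z₁ ⊆ Set.Iio o) (h₂ : Z₂ ⊆ Set.Iio o) (hT : T Z₁ = T Z₂) :
    Set.InjOn (omap Z₁ Z₂) Z₁ := by
  intro a ha a' ha' h
  rcases lt_trichotomy a a' with h' | h' | h'
  · exact absurd (omap_lt_omap h₁ h₂ hT ha ha' h') (by rw [h]; exact lt_irrefl _)
  · exact h'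
  · exact absurd (omap_lt_omap h₁ h₂ hT ha' ha h') (by rw [h]; exact lt_irrefl _)

theorem omap_eq_self (h₁ : Z₁ ⊆ Set.Iio o) (h₂ : Z₂ ⊆ Set.Iio o) (hT : T Z₁ = T Z₂)
    {a : Ordinal} (ha : a ∈ Z₁) (ha2 : a ∈ Z₂)
    (hseg : Z₁ ∩ Set.Iio a = Z₂ ∩ Set.Iio a) : omap Z₁ Z₂ a = a :=
  omap_eq_of h₁ h₂ hT ha ha2 (by rw [hseg])

end Aux3

section Aux4
open Ordinal Cardinal

theorem isRegular_lift {κ : Cardinal.{0}} (hκ : κ.IsRegular) :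
    (Cardinal.lift.{1} κ).IsRegular := by
  constructor
  · rw [← Cardinal.lift_aleph0.{1, 0}]
    exact Cardinal.lift_le.2 hκ.1
  · rw [← Cardinal.lift_ord, ← Ordinal.lift_cof]
    exact Cardinal.lift_le.2 hκ.2

set_option linter.deprecated false

namespace TwoCardinal

variable {κ : Cardinal.{0}} (M : TwoCardinal κ)

theorem wfrank_lt (hκ : κ.IsRegular) (X : M.mu) :
    (M.wf.apply X).rank < Ordinal.lift.{1} κ.ord := by
  induction X using M.wf.induction with
  | _ X IH =>
    rw [(M.wf.apply X).rank_eq]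
    rw [Cardinal.lift_ord]
    refine Cardinal.iSup_lt_ord_lift_of_isRegular.{1,0} (isRegular_lift hκ) ?_ ?_
    · simpa using M.locSmall X
    · rintro ⟨Z, hZ⟩
      have := IH Z hZ
      rw [Cardinal.lift_ord] at this
      exact ((Cardinal.isSuccLimit_ord (isRegular_lift hκ).1).succ_lt this)

theorem liftable_wfrank (hκ : κ.IsRegular) (X : M.mu) : Liftable ((M.wf.apply X).rank) :=
  liftable_of_le (M.wfrank_lt hκ X).le

theorem lift_rank (hκ : κ.IsRegular) (X : M.mu) :
    Ordinal.lift.{1} (M.rank X) = (M.wf.apply X).rank :=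
  (M.liftable_wfrank hκ X).lift_olower

theorem rank_eq_iff (hκ : κ.IsRegular) {X Y : M.mu} :
    M.rank X = M.rank Y ↔ (M.wf.apply X).rank = (M.wf.apply Y).rank := by
  rw [← Ordinal.lift_inj, M.lift_rank hκ, M.lift_rank hκ]

theorem rank_lt_iff (hκ : κ.IsRegular) {X Y : M.mu} :
    M.rank X < M.rank Y ↔ (M.wf.apply X).rank < (M.wf.apply Y).rank := by
  rw [← Ordinal.lift_lt, M.lift_rank hκ, M.lift_rank hκ]

theorem rank_lt_of_ssubset (hκ : κ.IsRegular) {X Y : M.mu}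
    (h : (X : Set Ordinal) ⊂ (Y : Set Ordinal)) : M.rank X < M.rank Y :=
  (M.rank_lt_iff hκ).2 ((M.wf.apply Y).rank_lt_of_rel h)

theorem rank_le_of_subset (hκ : κ.IsRegular) {X Y : M.mu}
    (h : (X : Set Ordinal) ⊆ (Y : Set Ordinal)) : M.rank X ≤ M.rank Y := by
  rcases h.ssubset_or_eq with h | h
  · exact (M.rank_lt_of_ssubset hκ h).le
  · rw [Subtype.ext h]

theorem exists_ssubset_rank_ge (hκ : κ.IsRegular) {X : M.mu} {ξ : Ordinal}
    (h : ξ < M.rank X) :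
    ∃ Z : M.mu, (Z : Set Ordinal) ⊂ (X : Set Ordinal) ∧ ξ ≤ M.rank Z := by
  have h' : Ordinal.lift.{1} ξ < (M.wf.apply X).rank := by
    rw [← M.lift_rank hκ]; exact Ordinal.lift_lt.2 h
  rw [(M.wf.apply X).rank_eq, Ordinal.lt_iSup_iff] at h'
  obtain ⟨⟨Z, hZ⟩, hlt⟩ := h'
  refine ⟨Z, hZ, ?_⟩
  rw [Order.lt_succ_iff, ← M.lift_rank hκ, Ordinal.lift_le] at hlt
  exact hlt

theorem exists_rank_ge_of_lt_ht {ξ : Ordinal} (h : ξ < M.ht) :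
    ∃ X : M.mu, ξ ≤ M.rank X := by
  rcases Set.eq_empty_or_nonempty (Set.range fun X : M.mu => M.rank X + 1) with he | hne
  · rw [ht, he, csSup_empty] at h
    exact absurd h (not_lt.2 (zero_le (a := ξ)))
  · obtain ⟨_, ⟨X, rfl⟩, hlt⟩ := exists_lt_of_lt_csSup hne h
    exact ⟨X, Order.lt_succ_iff.1 (by simpa using hlt)⟩

end TwoCardinal
end Aux4

section Aux5
open Ordinal Cardinal
set_option linter.deprecated false

namespace TwoCardinal

variable {κ : Cardinal.{0}} (M : TwoCardinal κ)

theorem wfrank_image_omap {Z₁ Z₂ : M.mu} (hr : (M.wf.apply Z₁).rank = (M.wf.apply Z₂).rank) :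
    ∀ S : M.mu, (S : Set Ordinal) ⊂ (Z₁ : Set Ordinal) → ∀ Y : M.mu,
      (Y : Set Ordinal) = omap (Z₁ : Set Ordinal) (Z₂ : Set Ordinal) '' (S : Set Ordinal) →
      (M.wf.apply Y).rank = (M.wf.apply S).rank := by
  have h₁ : (Z₁ : Set Ordinal) ⊆ Set.Iio (Order.succ κ).ord := M.mem_sub _ Z₁.2
  have h₂ : (Z₂ : Set Ordinal) ⊆ Set.Iio (Order.succ κ).ord := M.mem_sub _ Z₂.2
  have hT : T (Z₁ : Set Ordinal) = T (Z₂ : Set Ordinal) :=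
    (otp_eq_iff h₁ h₂).1 (M.homog Z₁ Z₂ hr).1
  have hinj := omap_injOn h₁ h₂ hT
  have hsets := (M.homog Z₁ Z₂ hr).2
  intro S
  refine M.wf.induction
    (C := fun S => (S : Set Ordinal) ⊂ (Z₁ : Set Ordinal) → ∀ Y : M.mu,
      (Y : Set Ordinal) = omap (Z₁ : Set Ordinal) (Z₂ : Set Ordinal) '' (S : Set Ordinal) →
      (M.wf.apply Y).rank = (M.wf.apply S).rank) S ?_
  clear S
  intro S IH hS Y hY
  have hYmem : (Y : Set Ordinal) ∈ {Z | Z ∈ M.mu ∧ Z ⊂ (Z₂ : Set Ordinal)} := by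
    rw [hsets, hY]
    exact Set.mem_image_of_mem _ ⟨S.2, hS⟩
  have key : ∀ W : M.mu, (W : Set Ordinal) ⊂ (Y : Set Ordinal) →
      ∃ b : M.mu, (b : Set Ordinal) ⊂ (S : Set Ordinal) ∧ (M.wf.apply W).rank = (M.wf.apply b).rank := by
    intro W hW
    have hWmem : (W : Set Ordinal) ∈ {Z | Z ∈ M.mu ∧ Z ⊂ (Z₂ : Set Ordinal)} :=
      ⟨W.2, hW.trans hYmem.2⟩
    rw [hsets] at hWmem
    obtain ⟨bset, ⟨hbmu, hbss⟩, hbe⟩ := hWmem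
    change omap (Z₁ : Set Ordinal) (Z₂ : Set Ordinal) '' bset = (W : Set Ordinal) at hbe
    have hbS : (⟨bset, hbmu⟩ : M.mu).val ⊂ (S : Set Ordinal) := by
      refine (hinj.image_ssubset_image_iff hbss.subset hS.subset).1 ?_
      show omap _ _ '' bset ⊂ _
      rw [hbe, ← hY]; exact hW
    exact ⟨⟨bset, hbmu⟩, hbS, IH ⟨bset, hbmu⟩ hbS (hbS.trans hS) W hbe.symm⟩
  have key' : ∀ b : M.mu, (b : Set Ordinal) ⊂ (S : Set Ordinal) →
      ∃ W : M.mu, (W : Set Ordinal) ⊂ (Y : Set Ordinal) ∧ (M.wf.apply W).rank = (M.wf.apply b).rank := by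
    intro b hb
    have hWmem : omap (Z₁ : Set Ordinal) (Z₂ : Set Ordinal) '' (b : Set Ordinal) ∈
        {Z | Z ∈ M.mu ∧ Z ⊂ (Z₂ : Set Ordinal)} := by
      rw [hsets]
      exact Set.mem_image_of_mem _ ⟨b.2, hb.trans hS⟩
    refine ⟨⟨_, hWmem.1⟩, ?_, IH b hb (hb.trans hS) ⟨_, hWmem.1⟩ rfl⟩
    show omap _ _ '' (b : Set Ordinal) ⊂ (Y : Set Ordinal)
    rw [hY]
    exact (hinj.image_ssubset_image_iff (hb.trans hS).subset hS.subset).2 hb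
  rw [(M.wf.apply Y).rank_eq, (M.wf.apply S).rank_eq]
  apply le_antisymm <;> rw [Ordinal.iSup_le_iff]
  · rintro ⟨W, hW⟩
    obtain ⟨b, hbS, he⟩ := key W hW
    calc Order.succ ((M.wf.apply W).rank) = Order.succ ((M.wf.apply b).rank) := by rw [he]
    _ ≤ _ := Ordinal.le_iSup (fun p : {b : M.mu // (b : Set Ordinal) ⊂ (S : Set Ordinal)} =>
        Order.succ ((M.wf.apply p.1).rank)) ⟨b, hbS⟩
  · rintro ⟨b, hb⟩
    obtain ⟨W, hWY, he⟩ := key' b hb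
    calc Order.succ ((M.wf.apply b).rank) = Order.succ ((M.wf.apply W).rank) := by rw [he]
    _ ≤ _ := Ordinal.le_iSup (fun p : {W : M.mu // (W : Set Ordinal) ⊂ (Y : Set Ordinal)} =>
        Order.succ ((M.wf.apply p.1).rank)) ⟨W, hWY⟩

end TwoCardinal
end Aux5

section Aux6
open Ordinal Cardinal
set_option linter.deprecated false

namespace TwoCardinal

variable {κ : Cardinal.{0}} (M : TwoCardinal κ)

theorem exists_rank_eq (hκ : κ.IsRegular) (α ξ : Ordinal) :
    ∀ η (X : M.mu), M.rank X = η → α ∈ (X : Set Ordinal) → ξ ≤ η →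
    ∃ W : M.mu, M.rank W = ξ ∧ α ∈ (W : Set Ordinal) := by
  intro η
  induction η using Ordinal.induction with
  | h η IH =>
  intro X hX hα hξ
  rcases eq_or_lt_of_le hξ with rfl | hlt
  · exact ⟨X, hX, hα⟩
  have hrk : ξ < M.rank X := hX ▸ hlt
  have hne : (M.wf.apply X).rank ≠ 0 := by
    intro h0
    have h1 : Ordinal.lift.{1,0} (M.rank X) = Ordinal.lift.{1,0} (0 : Ordinal) := by
      rw [M.lift_rank hκ X, h0, Ordinal.lift_zero]
    exact ((zero_le (a := ξ)).trans_lt hrk).ne' (Ordinal.lift_inj.1 h1)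
  rcases M.locAlmostDirected X with hdir | ⟨X₁, X₂, hr12, hstar, hsets⟩
  · have hα' := hα
    rw [M.neat X hne] at hα'
    obtain ⟨Z₀, ⟨hZ₀mu, hZ₀ss⟩, hαZ₀⟩ := hα'
    obtain ⟨Z₁, hZ₁ss, hξZ₁⟩ := M.exists_ssubset_rank_ge hκ hrk
    obtain ⟨W, hWmu, hWss, h0W, h1W⟩ := hdir Z₀ hZ₀mu Z₁.val Z₁.2 hZ₀ss hZ₁ss
    exact IH (M.rank ⟨W, hWmu⟩) (hX ▸ M.rank_lt_of_ssubset hκ hWss) ⟨W, hWmu⟩ rfl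
      (h0W hαZ₀) (hξZ₁.trans (M.rank_le_of_subset hκ h1W))
  · have hr12' : M.rank X₁ = M.rank X₂ := (M.rank_eq_iff hκ).2 hr12
    have hX₁ss : (X₁ : Set Ordinal) ⊂ (X : Set Ordinal) := by
      have : (X₁ : Set Ordinal) ∈ {Z | Z ∈ M.mu ∧ Z ⊂ (X : Set Ordinal)} := by
        rw [hsets]; exact Or.inr (Set.mem_insert _ _)
      exact this.2
    have hX₂ss : (X₂ : Set Ordinal) ⊂ (X : Set Ordinal) := by
      have : (X₂ : Set Ordinal) ∈ {Z | Z ∈ M.mu ∧ Z ⊂ (X : Set Ordinal)} := by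
        rw [hsets]; exact Or.inr (Set.mem_insert_of_mem _ rfl)
      exact this.2
    have hξ₁ : ξ ≤ M.rank X₁ := by
      obtain ⟨Z, hZss, hξZ⟩ := M.exists_ssubset_rank_ge hκ hrk
      have hZmem : (Z : Set Ordinal) ∈ {S | S ∈ M.mu ∧ S ⊂ (X₁ : Set Ordinal)} ∪
          {S | S ∈ M.mu ∧ S ⊂ (X₂ : Set Ordinal)} ∪
          {(X₁ : Set Ordinal), (X₂ : Set Ordinal)} := by
        rw [← hsets]; exact ⟨Z.2, hZss⟩
      rcases hZmem with (h | h) | h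
      · exact hξZ.trans (M.rank_lt_of_ssubset hκ h.2).le
      · exact hξZ.trans ((M.rank_lt_of_ssubset hκ h.2).le.trans hr12'.symm.le)
      · rcases h with h | h
        · exact hξZ.trans (congrArg M.rank (Subtype.ext h)).le
        · refine hξZ.trans ((congrArg M.rank (Subtype.ext h)).le.trans hr12'.symm.le)
    have hα12 : α ∈ (X₁ : Set Ordinal) ∪ (X₂ : Set Ordinal) := hstar.2.1 ▸ hα
    rcases hα12 with h | h
    · exact IH (M.rank X₁) (hX ▸ M.rank_lt_of_ssubset hκ hX₁ss) X₁ rfl h hξ₁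
    · exact IH (M.rank X₂) (hX ▸ M.rank_lt_of_ssubset hκ hX₂ss) X₂ rfl h
        (hξ₁.trans hr12'.le)

end TwoCardinal
end Aux6

section Aux7
open Ordinal Cardinal
set_option linter.deprecated false

namespace TwoCardinal

variable {κ : Cardinal.{0}} (M : TwoCardinal κ)

theorem mixed (hκ : κ.IsRegular) (α : Ordinal) (Z₁ Z₂ : M.mu)
    (hr : (M.wf.apply Z₁).rank = (M.wf.apply Z₂).rank)
    (hseg : (Z₁ : Set Ordinal) ∩ Set.Iio α = (Z₂ : Set Ordinal) ∩ Set.Iio α)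
    (IH1 : ∀ X Y : M.mu, (X : Set Ordinal) ⊆ (Z₁ : Set Ordinal) →
        (Y : Set Ordinal) ⊆ (Z₁ : Set Ordinal) → M.rank X = M.rank Y →
        α ∈ (X : Set Ordinal) → α ∈ (Y : Set Ordinal) →
        (X : Set Ordinal) ∩ Set.Iio α = (Y : Set Ordinal) ∩ Set.Iio α)
    (X Y : M.mu) (hXs : (X : Set Ordinal) ⊆ (Z₁ : Set Ordinal))
    (hYs : (Y : Set Ordinal) ⊆ (Z₂ : Set Ordinal))
    (hrXY : M.rank X = M.rank Y) (hαX : α ∈ (X : Set Ordinal))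
    (hαY : α ∈ (Y : Set Ordinal)) :
    (X : Set Ordinal) ∩ Set.Iio α = (Y : Set Ordinal) ∩ Set.Iio α := by
  have h₁ : (Z₁ : Set Ordinal) ⊆ Set.Iio (Order.succ κ).ord := M.mem_sub _ Z₁.2
  have h₂ : (Z₂ : Set Ordinal) ⊆ Set.Iio (Order.succ κ).ord := M.mem_sub _ Z₂.2
  have hT : T (Z₁ : Set Ordinal) = T (Z₂ : Set Ordinal) :=
    (otp_eq_iff h₁ h₂).1 (M.homog Z₁ Z₂ hr).1
  have hsets := (M.homog Z₁ Z₂ hr).2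
  have hαZ₁ : α ∈ (Z₁ : Set Ordinal) := hXs hαX
  have hαZ₂ : α ∈ (Z₂ : Set Ordinal) := hYs hαY
  set f := omap (Z₁ : Set Ordinal) (Z₂ : Set Ordinal) with hf
  have ffix : ∀ a ∈ (Z₁ : Set Ordinal), a ≤ α → f a = a := by
    intro a ha hle
    have ha2 : a ∈ (Z₂ : Set Ordinal) := by
      rcases eq_or_lt_of_le hle with rfl | hlt
      · exact hαZ₂
      · exact (hseg.subset ⟨ha, hlt⟩).1
    refine omap_eq_self h₁ h₂ hT ha ha2 ?_
    ext x
    constructor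
    · rintro ⟨hx, hxa⟩
      exact ⟨(hseg.subset ⟨hx, hxa.trans_le hle⟩).1, hxa⟩
    · rintro ⟨hx, hxa⟩
      exact ⟨(hseg.symm.subset ⟨hx, hxa.trans_le hle⟩).1, hxa⟩
  have fα : f α = α := ffix α hαZ₁ le_rfl
  have fgt : ∀ a ∈ (Z₁ : Set Ordinal), α < a → α < f a := by
    intro a ha hlt
    have := omap_lt_omap h₁ h₂ hT hαZ₁ ha hlt
    rwa [← hf, fα] at this
  rcases hYs.ssubset_or_eq with hYss | hYe
  · -- Y a proper subset of Z₂: pull it back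
    have hYmem : (Y : Set Ordinal) ∈ {Z | Z ∈ M.mu ∧ Z ⊂ (Z₂ : Set Ordinal)} := ⟨Y.2, hYss⟩
    rw [hsets] at hYmem
    obtain ⟨X'set, ⟨hX'mu, hX'ss⟩, hYe⟩ := hYmem
    change f '' X'set = (Y : Set Ordinal) at hYe
    set X' : M.mu := ⟨X'set, hX'mu⟩ with hX'
    have hrX'Y : (M.wf.apply Y).rank = (M.wf.apply X').rank :=
      M.wfrank_image_omap hr X' hX'ss Y hYe.symm
    have hαX' : α ∈ X'set := by
      have : α ∈ f '' X'set := hYe ▸ hαY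
      obtain ⟨a, haX', hfa⟩ := this
      have haZ₁ : a ∈ (Z₁ : Set Ordinal) := hX'ss.subset haX'
      rcases lt_trichotomy a α with h | h | h
      · rw [ffix a haZ₁ h.le] at hfa; exact hfa ▸ haX'
      · exact h ▸ haX'
      · exact absurd (hfa ▸ fgt a haZ₁ h) (lt_irrefl α)
    have hseg' : (Y : Set Ordinal) ∩ Set.Iio α = X'set ∩ Set.Iio α := by
      ext b
      constructor
      · rintro ⟨hbY, hbα⟩
        rw [← hYe] at hbY
        obtain ⟨a, haX', hfa⟩ := hbY
        have haZ₁ : a ∈ (Z₁ : Set Ordinal) := hX'ss.subset haX'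
        rcases le_or_gt a α with h | h
        · rw [ffix a haZ₁ h] at hfa
          exact ⟨hfa ▸ haX', hbα⟩
        · exact absurd (hfa ▸ fgt a haZ₁ h) (not_lt.2 hbα.le)
      · rintro ⟨hbX', hbα⟩
        have hbZ₁ : b ∈ (Z₁ : Set Ordinal) := hX'ss.subset hbX'
        refine ⟨?_, hbα⟩
        rw [← hYe]
        exact ⟨b, hbX', ffix b hbZ₁ hbα.le⟩
    have hrXX' : M.rank X = M.rank X' := hrXY.trans ((M.rank_eq_iff hκ).2 hrX'Y)
    exact (IH1 X X' hXs hX'ss.subset hrXX' hαX hαX').trans hseg'.symm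
  · -- Y = Z₂
    rcases hXs.ssubset_or_eq with hXss | hXe
    · exfalso
      have h1 : M.rank X < M.rank Z₁ := M.rank_lt_of_ssubset hκ hXss
      have h2 : M.rank Z₁ = M.rank Z₂ := (M.rank_eq_iff hκ).2 hr
      have h3 : M.rank Z₂ = M.rank Y := congrArg M.rank (Subtype.ext hYe.symm)
      rw [h2, h3, ← hrXY] at h1
      exact lt_irrefl _ h1
    · rw [hXe, hYe]; exact hseg

theorem unique_aux (hκ : κ.IsRegular) (α : Ordinal) :
    ∀ η, ∀ Z X Y : M.mu, M.rank Z = η →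
      (X : Set Ordinal) ⊆ (Z : Set Ordinal) → (Y : Set Ordinal) ⊆ (Z : Set Ordinal) →
      M.rank X = M.rank Y → α ∈ (X : Set Ordinal) → α ∈ (Y : Set Ordinal) →
      (X : Set Ordinal) ∩ Set.Iio α = (Y : Set Ordinal) ∩ Set.Iio α := by
  intro η
  induction η using Ordinal.induction with
  | h η IH =>
  intro Z X Y hZ hXs hYs hr hαX hαY
  rcases hXs.ssubset_or_eq with hXss | hXe
  swap
  · rcases hYs.ssubset_or_eq with hYss | hYe
    · exfalso
      have h1 : M.rank Y < M.rank Z := M.rank_lt_of_ssubset hκ hYss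
      rw [← hr, congrArg M.rank (Subtype.ext hXe)] at h1
      exact lt_irrefl _ h1
    · rw [hXe, hYe]
  rcases hYs.ssubset_or_eq with hYss | hYe
  swap
  · exfalso
    have h1 : M.rank X < M.rank Z := M.rank_lt_of_ssubset hκ hXss
    rw [hr, congrArg M.rank (Subtype.ext hYe)] at h1
    exact lt_irrefl _ h1
  -- both proper subsets of Z
  rcases M.locAlmostDirected Z with hdir | ⟨Z₁, Z₂, hr12, hstar, hsets⟩
  · obtain ⟨W, hWmu, hWss, hXW, hYW⟩ := hdir X.val X.2 Y.val Y.2 hXss hYss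
    exact IH (M.rank ⟨W, hWmu⟩) (hZ ▸ M.rank_lt_of_ssubset hκ hWss) ⟨W, hWmu⟩ X Y rfl
      hXW hYW hr hαX hαY
  · have hZ₁ss : (Z₁ : Set Ordinal) ⊂ (Z : Set Ordinal) := by
      have : (Z₁ : Set Ordinal) ∈ {S | S ∈ M.mu ∧ S ⊂ (Z : Set Ordinal)} := by
        rw [hsets]; exact Or.inr (Set.mem_insert _ _)
      exact this.2
    have hZ₂ss : (Z₂ : Set Ordinal) ⊂ (Z : Set Ordinal) := by
      have : (Z₂ : Set Ordinal) ∈ {S | S ∈ M.mu ∧ S ⊂ (Z : Set Ordinal)} := by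
        rw [hsets]; exact Or.inr (Set.mem_insert_of_mem _ rfl)
      exact this.2
    have hns1 : ¬(Z₁ : Set Ordinal) ⊆ (Z₂ : Set Ordinal) := by
      intro h
      have : (Z : Set Ordinal) = (Z₂ : Set Ordinal) := by
        rw [hstar.2.1, Set.union_eq_self_of_subset_left h]
      exact hZ₂ss.ne (this ▸ rfl)
    have hns2 : ¬(Z₂ : Set Ordinal) ⊆ (Z₁ : Set Ordinal) := by
      intro h
      have : (Z : Set Ordinal) = (Z₁ : Set Ordinal) := by
        rw [hstar.2.1, Set.union_eq_self_of_subset_right h]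
      exact hZ₁ss.ne (this ▸ rfl)
    have hseg : α ∈ (Z₁ : Set Ordinal) → α ∈ (Z₂ : Set Ordinal) →
        (Z₁ : Set Ordinal) ∩ Set.Iio α = (Z₂ : Set Ordinal) ∩ Set.Iio α := by
      intro h1 h2
      ext b
      constructor
      · rintro ⟨hb, hbα⟩
        by_cases hb2 : b ∈ (Z₂ : Set Ordinal)
        · exact ⟨hb2, hbα⟩
        · exact absurd hbα (not_lt.2 (hstar.2.2.1 α ⟨h1, h2⟩ b ⟨hb, hb2⟩).le)
      · rintro ⟨hb, hbα⟩
        by_cases hb1 : b ∈ (Z₁ : Set Ordinal)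
        · exact ⟨hb1, hbα⟩
        · obtain ⟨c, hc1, hc2⟩ := Set.not_subset.1 hns1
          have hαc := hstar.2.2.1 α ⟨h1, h2⟩ c ⟨hc1, hc2⟩
          have hcb := hstar.2.2.2 c ⟨hc1, hc2⟩ b ⟨hb, hb1⟩
          exact absurd hbα (not_lt.2 (hαc.trans hcb).le)
    have hcases : ∀ W : M.mu, (W : Set Ordinal) ⊂ (Z : Set Ordinal) →
        (W : Set Ordinal) ⊆ (Z₁ : Set Ordinal) ∨ (W : Set Ordinal) ⊆ (Z₂ : Set Ordinal) := by
      intro W hW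
      have hmem : (W : Set Ordinal) ∈ {S | S ∈ M.mu ∧ S ⊂ (Z₁ : Set Ordinal)} ∪
          {S | S ∈ M.mu ∧ S ⊂ (Z₂ : Set Ordinal)} ∪
          {(Z₁ : Set Ordinal), (Z₂ : Set Ordinal)} := by
        rw [← hsets]; exact ⟨W.2, hW⟩
      rcases hmem with (h | h) | h
      · exact Or.inl h.2.subset
      · exact Or.inr h.2.subset
      · rcases h with h | h
        · exact Or.inl h.le
        · exact Or.inr h.le
    have IH1 : ∀ X' Y' : M.mu, (X' : Set Ordinal) ⊆ (Z₁ : Set Ordinal) →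
        (Y' : Set Ordinal) ⊆ (Z₁ : Set Ordinal) → M.rank X' = M.rank Y' →
        α ∈ (X' : Set Ordinal) → α ∈ (Y' : Set Ordinal) →
        (X' : Set Ordinal) ∩ Set.Iio α = (Y' : Set Ordinal) ∩ Set.Iio α :=
      fun X' Y' h1 h2 h3 h4 h5 =>
        IH (M.rank Z₁) (hZ ▸ M.rank_lt_of_ssubset hκ hZ₁ss) Z₁ X' Y' rfl h1 h2 h3 h4 h5
    have IH2 : ∀ X' Y' : M.mu, (X' : Set Ordinal) ⊆ (Z₂ : Set Ordinal) →
        (Y' : Set Ordinal) ⊆ (Z₂ : Set Ordinal) → M.rank X' = M.rank Y' →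
        α ∈ (X' : Set Ordinal) → α ∈ (Y' : Set Ordinal) →
        (X' : Set Ordinal) ∩ Set.Iio α = (Y' : Set Ordinal) ∩ Set.Iio α :=
      fun X' Y' h1 h2 h3 h4 h5 =>
        IH (M.rank Z₂) (hZ ▸ M.rank_lt_of_ssubset hκ hZ₂ss) Z₂ X' Y' rfl h1 h2 h3 h4 h5
    rcases hcases X hXss with hX1 | hX2 <;> rcases hcases Y hYss with hY1 | hY2
    · exact IH1 X Y hX1 hY1 hr hαX hαY
    · exact M.mixed hκ α Z₁ Z₂ hr12 (hseg (hX1 hαX) (hY2 hαY)) IH1 X Y hX1 hY2 hr hαX hαY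
    · exact M.mixed hκ α Z₂ Z₁ hr12.symm (hseg (hY1 hαY) (hX2 hαX)).symm IH2 X Y hX2 hY1
        hr hαX hαY
    · exact IH2 X Y hX2 hY2 hr hαX hαY

end TwoCardinal
end Aux7

/-- The μ-sequence `μ_ξ(α) = X ∩ α` is well-defined: an `X ∈ μ` of rank `ξ` containing `α`
always exists, and `X ∩ α` does not depend on the choice of such an `X`. -/
theorem museq_well_defined (κ : Cardinal) (hκ : κ.IsRegular) (M : TwoCardinal κ)
    (α ξ : Ordinal) (hα : α < (Order.succ κ).ord) (hξ : ξ < M.ht) :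
    (∃ X : M.mu, M.rank X = ξ ∧ α ∈ (X : Set Ordinal)) ∧
    ∀ X Y : M.mu, M.rank X = ξ → M.rank Y = ξ →
      α ∈ (X : Set Ordinal) → α ∈ (Y : Set Ordinal) →
      (X : Set Ordinal) ∩ Set.Iio α = (Y : Set Ordinal) ∩ Set.Iio α := by
  constructor
  · have hα' : α ∈ ⋃₀ M.mu := M.covers.symm ▸ hα
    obtain ⟨X₀, hX₀mu, hαX₀⟩ := hα'
    obtain ⟨X₁, hξ₁⟩ := M.exists_rank_ge_of_lt_ht hξ
    obtain ⟨Z, hZmu, hs0, hs1⟩ := M.directed X₀ hX₀mu X₁.val X₁.2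
    obtain ⟨W, hW, hαW⟩ := M.exists_rank_eq hκ α ξ (M.rank ⟨Z, hZmu⟩) ⟨Z, hZmu⟩ rfl
      (hs0 hαX₀) (hξ₁.trans (M.rank_le_of_subset hκ hs1))
    exact ⟨W, hW, hαW⟩
  · intro X Y hX hY hαX hαY
    obtain ⟨Z, hZmu, hsX, hsY⟩ := M.directed X.val X.2 Y.val Y.2
    exact M.unique_aux hκ α (M.rank ⟨Z, hZmu⟩) ⟨Z, hZmu⟩ X Y rfl hsX hsY
      (hX.trans hY.symm) hαX hαY
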